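/- arXiv:1201.2308 — 3 statements merged into one kernel-verified Lean document; each statement's English description precedes it below -/
import Mathlib

section
/- Let H be a real inner product space, a : H × H → ℝ a symmetric bilinear form with a(v,v) ≥ 0 for all v ∈ H, and let (λ,u) be an eigenpair (⟨u,u⟩ = 1, a(u,v) = λ⟨u,v⟩ for all v) such that λ ≤ a(w,w) for every w ∈ H with ⟨w,w⟩ = 1 (λ is the minimum of the Rayleigh quotient). Let V ⊆ H be a subspace. Then λ ≤ a(w,w) for every w ∈ V with ⟨w,w⟩ = 1, and for every v ∈ V with ⟨v,v⟩ = 1 one has a(v,v) ≤ λ + a(u−v, u−v). In particular the discrete first eigenvalue λ_V := inf{a(w,w) : w ∈ V, ⟨w,w⟩ = 1} satisfies λ ≤ λ_V ≤ λ + a(u−v, u−v) for every unit vector v ∈ V. -/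
/-- Minimum-maximum principle for the first eigenvalue: if `lam` is the minimum
of the Rayleigh quotient of a positive semidefinite symmetric bilinear form `a`
with eigenvector `u`, then on any subspace `V` the Rayleigh quotient is `≥ lam`,
every unit `v ∈ V` satisfies `a(v,v) ≤ lam + a(u−v,u−v)`, and the discrete first
eigenvalue `λ_V = inf {a(w,w) : w ∈ V, ⟪w,w⟫ = 1}` satisfies
`lam ≤ λ_V ≤ lam + a(u−v,u−v)` for every unit `v ∈ V`. -/
theorem discrete_first_eigenvalue_bounds
    {H : Type*} [NormedAddCommGroup H] [InnerProductSpace ℝ H]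
    (a : H →ₗ[ℝ] H →ₗ[ℝ] ℝ) (hsymm : ∀ v w : H, a v w = a w v)
    (hpos : ∀ v : H, 0 ≤ a v v)
    (lam : ℝ) (u : H) (hu : (inner ℝ u u : ℝ) = 1)
    (heig : ∀ v : H, a u v = lam * (inner ℝ u v : ℝ))
    (hmin : ∀ w : H, (inner ℝ w w : ℝ) = 1 → lam ≤ a w w)
    (V : Submodule ℝ H) :
    (∀ w ∈ V, (inner ℝ w w : ℝ) = 1 → lam ≤ a w w) ∧
    (∀ v ∈ V, (inner ℝ v v : ℝ) = 1 → a v v ≤ lam + a (u - v) (u - v)) ∧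
    (∀ v ∈ V, (inner ℝ v v : ℝ) = 1 →
      lam ≤ sInf {x : ℝ | ∃ w ∈ V, (inner ℝ w w : ℝ) = 1 ∧ a w w = x} ∧
      sInf {x : ℝ | ∃ w ∈ V, (inner ℝ w w : ℝ) = 1 ∧ a w w = x}
        ≤ lam + a (u - v) (u - v)) := by
  have hlam : lam = a u u := by rw [heig u, hu]; ring
  have hlam0 : 0 ≤ lam := hlam ▸ hpos u
  have hkey : ∀ v : H, (inner ℝ v v : ℝ) = 1 → a v v ≤ lam + a (u - v) (u - v) := by
    intro v hv
    have hnu : ‖u‖ = 1 := by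
      have := real_inner_self_eq_norm_sq u
      nlinarith [norm_nonneg u]
    have hnv : ‖v‖ = 1 := by
      have := real_inner_self_eq_norm_sq v
      nlinarith [norm_nonneg v]
    have hcs : (inner ℝ u v : ℝ) ≤ 1 := by
      have := real_inner_le_norm u v
      rwa [hnu, hnv, one_mul] at this
    have hexp : a (u - v) (u - v) = a u u - 2 * a u v + a v v := by
      simp only [map_sub, LinearMap.sub_apply]
      rw [hsymm v u]; ring
    have hauv : a u v = lam * (inner ℝ u v : ℝ) := heig v
    nlinarith [mul_nonneg hlam0 (sub_nonneg.mpr hcs)]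
  refine ⟨fun w _ hw => hmin w hw, fun v _ hv => hkey v hv, fun v hvV hv => ?_⟩
  have hne : (a v v) ∈ {x : ℝ | ∃ w ∈ V, (inner ℝ w w : ℝ) = 1 ∧ a w w = x} :=
    ⟨v, hvV, hv, rfl⟩
  have hbdd : ∀ x ∈ {x : ℝ | ∃ w ∈ V, (inner ℝ w w : ℝ) = 1 ∧ a w w = x}, lam ≤ x := by
    rintro x ⟨w, _, hw, rfl⟩; exact hmin w hw
  constructor
  · exact le_csInf ⟨_, hne⟩ hbdd
  · exact le_trans (csInf_le ⟨lam, hbdd⟩ hne) (hkey v hv)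
end

section
/- (Aubin–Nitsche duality estimate.) Let H be a real inner product space, a : H × H → ℝ a symmetric bilinear form with a(v,v) ≥ 0 for all v ∈ H, and K : H → H a linear map satisfying a(Kf, v) = ⟨f, v⟩ for all f, v ∈ H. Let V ⊆ H be a subspace and η ≥ 0 be such that for every g ∈ H there exists v ∈ V with √(a(Kg − v, Kg − v)) ≤ η‖g‖. Then for every u ∈ H and every Galerkin projection w ∈ V of u onto V (a(u − w, v) = 0 for all v ∈ V) one has ‖u − w‖ ≤ η √(a(u − w, u − w)). -/
/-- Cauchy–Schwarz for a positive semidefinite symmetric bilinear form. -/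
lemma semidef_cauchy_schwarz
    {H : Type*} [NormedAddCommGroup H] [InnerProductSpace ℝ H]
    (a : H →ₗ[ℝ] H →ₗ[ℝ] ℝ) (hsymm : ∀ v w : H, a v w = a w v)
    (hpos : ∀ v : H, 0 ≤ a v v) (x y : H) :
    a x y ≤ Real.sqrt (a x x) * Real.sqrt (a y y) := by
  have hquad : ∀ t : ℝ, 0 ≤ a y y * (t * t) + (2 * a x y) * t + a x x := by
    intro t
    have := hpos (x + t • y)
    simp only [map_add, map_smul, LinearMap.add_apply, LinearMap.smul_apply,
      smul_eq_mul] at this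
    rw [hsymm y x] at this
    nlinarith [this]
  have hd := discrim_le_zero hquad
  rw [discrim] at hd
  have hsq : (a x y) ^ 2 ≤ a x x * a y y := by nlinarith
  calc a x y ≤ |a x y| := le_abs_self _
    _ = Real.sqrt ((a x y) ^ 2) := (Real.sqrt_sq_eq_abs _).symm
    _ ≤ Real.sqrt (a x x * a y y) := Real.sqrt_le_sqrt hsq
    _ = Real.sqrt (a x x) * Real.sqrt (a y y) :=
        Real.sqrt_mul (hpos x) _

/-- Aubin–Nitsche duality estimate: if `V` has approximation quality `η` for
the solution operator `K` of `a`, then for any `u` and any Galerkin projection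
`w ∈ V` of `u` one has `‖u − w‖ ≤ η ‖u − w‖_a`. -/
theorem aubin_nitsche_duality
    {H : Type*} [NormedAddCommGroup H] [InnerProductSpace ℝ H]
    (a : H →ₗ[ℝ] H →ₗ[ℝ] ℝ) (hsymm : ∀ v w : H, a v w = a w v)
    (hpos : ∀ v : H, 0 ≤ a v v)
    (K : H →ₗ[ℝ] H) (hK : ∀ f v : H, a (K f) v = (inner ℝ f v : ℝ))
    (V : Submodule ℝ H) (η : ℝ) (hη : 0 ≤ η)
    (happrox : ∀ g : H, ∃ v ∈ V,
      Real.sqrt (a (K g - v) (K g - v)) ≤ η * ‖g‖) :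
    ∀ u : H, ∀ w ∈ V, (∀ v ∈ V, a (u - w) v = 0) →
      ‖u - w‖ ≤ η * Real.sqrt (a (u - w) (u - w)) := by
  intro u w hw hG
  set e := u - w with he
  obtain ⟨v, hv, hineq⟩ := happrox e
  by_cases h0 : ‖e‖ = 0
  · rw [h0]
    positivity
  have hnorm : 0 < ‖e‖ := lt_of_le_of_ne (norm_nonneg _) (Ne.symm h0)
  have key : ‖e‖ ^ 2 ≤ (η * Real.sqrt (a e e)) * ‖e‖ := by
    have h1 : ‖e‖ ^ 2 = a e (K e - v) := by
      have : (inner ℝ e e : ℝ) = ‖e‖ ^ 2 := real_inner_self_eq_norm_sq e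
      rw [map_sub, hsymm e (K e), hK, this, hG v hv, sub_zero]
    have h2 : a e (K e - v) ≤ Real.sqrt (a e e) * Real.sqrt (a (K e - v) (K e - v)) :=
      semidef_cauchy_schwarz a hsymm hpos _ _
    have h3 : Real.sqrt (a e e) * Real.sqrt (a (K e - v) (K e - v))
        ≤ Real.sqrt (a e e) * (η * ‖e‖) :=
      mul_le_mul_of_nonneg_left hineq (Real.sqrt_nonneg _)
    nlinarith
  have := le_div_iff₀ hnorm |>.mpr key
  calc ‖e‖ = ‖e‖ ^ 2 / ‖e‖ := by field_simp
    _ ≤ η * Real.sqrt (a e e) := by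
        rw [div_le_iff₀ hnorm]; nlinarith
end

section
/- Let α ∈ (0,1), α₀ > 0, r > 0, and let (d_k)_{k≥0} be a sequence of nonnegative reals satisfying d_{k+1}² ≤ α² d_k² + α₀² r² d_{k-1}² for all k ≥ 1. With ᾱ² := (α² + √(α⁴ + 4α₀²r²))/2 and β² := 2α₀²/(α² + √(α⁴ + 4α₀²r²)), one has for every n ≥ 1: d_n² + β²r² d_{n-1}² ≤ ᾱ^{2(n-1)} (d_1² + β²r² d_0²); i.e. the quantity d_n² + β²r² d_{n-1}² decays geometrically with rate ᾱ². -/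
/-- Geometric decay (linear convergence) for the abstract contraction recursion
of the adaptive multilevel correction algorithm:
`d_n² + β²r² d_{n-1}² ≤ ᾱ^{2(n-1)} (d_1² + β²r² d_0²)` for all `n ≥ 1`. -/
theorem multilevel_geometric_decay
    (α α₀ r : ℝ) (hα : α ∈ Set.Ioo (0 : ℝ) 1) (hα₀ : 0 < α₀) (hr : 0 < r)
    (d : ℕ → ℝ) (hd : ∀ k, 0 ≤ d k)
    (hrec : ∀ k : ℕ,
      d (k + 2) ^ 2 ≤ α ^ 2 * d (k + 1) ^ 2 + α₀ ^ 2 * r ^ 2 * d k ^ 2)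
    (A B : ℝ)
    (hA : A = (α ^ 2 + Real.sqrt (α ^ 4 + 4 * α₀ ^ 2 * r ^ 2)) / 2)
    (hB : B = 2 * α₀ ^ 2 / (α ^ 2 + Real.sqrt (α ^ 4 + 4 * α₀ ^ 2 * r ^ 2))) :
    ∀ n : ℕ, d (n + 1) ^ 2 + B * r ^ 2 * d n ^ 2 ≤
      A ^ n * (d 1 ^ 2 + B * r ^ 2 * d 0 ^ 2) := by
  obtain ⟨hα0, hα1⟩ := hα
  set S := Real.sqrt (α ^ 4 + 4 * α₀ ^ 2 * r ^ 2) with hSdef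
  have hnn : (0:ℝ) ≤ α ^ 4 + 4 * α₀ ^ 2 * r ^ 2 := by positivity
  have hS2 : S ^ 2 = α ^ 4 + 4 * α₀ ^ 2 * r ^ 2 := Real.sq_sqrt hnn
  have hSpos : 0 < S := Real.sqrt_pos.mpr (by positivity)
  have hden : 0 < α ^ 2 + S := by positivity
  have hApos : 0 < A := by rw [hA]; positivity
  have hBpos : 0 < B := by rw [hB]; positivity
  have hAB : A * B = α₀ ^ 2 := by
    rw [hA, hB]; field_simp
  have hBr : α ^ 2 + B * r ^ 2 = A := by
    rw [hA, hB]; field_simp; nlinarith [hS2]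
  have step : ∀ k, d (k + 2) ^ 2 + B * r ^ 2 * d (k + 1) ^ 2 ≤
      A * (d (k + 1) ^ 2 + B * r ^ 2 * d k ^ 2) := by
    intro k
    have h := hrec k
    have e : A * (d (k + 1) ^ 2 + B * r ^ 2 * d k ^ 2) =
        α ^ 2 * d (k + 1) ^ 2 + B * r ^ 2 * d (k + 1) ^ 2 + α₀ ^ 2 * r ^ 2 * d k ^ 2 := by
      linear_combination (- d (k + 1) ^ 2) * hBr + r ^ 2 * d k ^ 2 * hAB
    linarith
  intro n
  induction n with
  | zero => simp
  | succ n ih =>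
    calc d (n + 1 + 1) ^ 2 + B * r ^ 2 * d (n + 1) ^ 2
        ≤ A * (d (n + 1) ^ 2 + B * r ^ 2 * d n ^ 2) := step n
      _ ≤ A * (A ^ n * (d 1 ^ 2 + B * r ^ 2 * d 0 ^ 2)) :=
          mul_le_mul_of_nonneg_left ih hApos.le
      _ = A ^ (n + 1) * (d 1 ^ 2 + B * r ^ 2 * d 0 ^ 2) := by ring
end
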